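/- For the two-qubit generator L_*(ρ) = -i[H,ρ] + σ₁⁻ρσ₁⁺ - ½{σ₁⁺σ₁⁻,ρ}, H = (ω/2)(σ₁⁺σ₂⁻+σ₁⁻σ₂⁺), no state ν supported in range(p₀^⊥) (p₀ = |00⟩⟨00|) satisfies p₀^⊥ L_*(ν) p₀^⊥ = -ν; i.e. α = 1 is not a quasi-stationary decay rate for this model. -/

import Mathlib

open Matrix Complex

noncomputable section

/-- `σ₁⁻ = |0⟩⟨1| ⊗ 1` on `ℂ² ⊗ ℂ²`, in the basis `|00⟩,|01⟩,|10⟩,|11⟩`. -/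
def sigma1m : Matrix (Fin 4) (Fin 4) ℂ :=
  !![0,0,1,0; 0,0,0,1; 0,0,0,0; 0,0,0,0]

/-- `σ₂⁻ = 1 ⊗ |0⟩⟨1|` on `ℂ² ⊗ ℂ²`, in the basis `|00⟩,|01⟩,|10⟩,|11⟩`. -/
def sigma2m : Matrix (Fin 4) (Fin 4) ℂ :=
  !![0,1,0,0; 0,0,0,0; 0,0,0,1; 0,0,0,0]

/-- Hamiltonian `H = (ω/2)(σ₁⁺σ₂⁻ + σ₁⁻σ₂⁺)`. -/
def Ham (ω : ℝ) : Matrix (Fin 4) (Fin 4) ℂ :=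
  ((ω : ℂ) / 2) • (sigma1mᴴ * sigma2m + sigma1m * sigma2mᴴ)

/-- The two-qubit GKLS generator with decay on the first site only:
`L_*(ρ) = -i[H,ρ] + σ₁⁻ ρ σ₁⁺ - ½{σ₁⁺σ₁⁻, ρ}`. -/
def Lstar (ω : ℝ) (ρ : Matrix (Fin 4) (Fin 4) ℂ) : Matrix (Fin 4) (Fin 4) ℂ :=
  (-Complex.I) • (Ham ω * ρ - ρ * Ham ω) + sigma1m * ρ * sigma1mᴴ
    - (1 / 2 : ℂ) • (sigma1mᴴ * sigma1m * ρ + ρ * (sigma1mᴴ * sigma1m))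


/-- The projection `p₀^⊥ = 1 - |00⟩⟨00|`. -/
def pperp : Matrix (Fin 4) (Fin 4) ℂ :=
  1 - Matrix.single (0 : Fin 4) (0 : Fin 4) (1 : ℂ)

lemma hs1d : sigma1mᴴ = !![0,0,0,0; 0,0,0,0; 1,0,0,0; 0,1,0,0] := by
  ext i j
  fin_cases i <;> fin_cases j <;>
    simp [sigma1m, Matrix.conjTranspose_apply, Matrix.vecHead, Matrix.vecTail]

lemma hs2d : sigma2mᴴ = !![0,0,0,0; 1,0,0,0; 0,0,0,0; 0,0,1,0] := by
  ext i j
  fin_cases i <;> fin_cases j <;>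
    simp [sigma2m, Matrix.conjTranspose_apply, Matrix.vecHead, Matrix.vecTail]

lemma hH (ω : ℝ) : Ham ω = ((ω:ℂ)/2) • !![0,0,0,0; 0,0,1,0; 0,1,0,0; 0,0,0,0] := by
  rw [Ham, hs1d, hs2d]
  congr 1
  ext i j
  fin_cases i <;> fin_cases j <;>
    simp [sigma1m, sigma2m, Matrix.mul_apply, Fin.sum_univ_four,
      Matrix.vecHead, Matrix.vecTail]

lemma hN : sigma1mᴴ * sigma1m = !![(0:ℂ),0,0,0; 0,0,0,0; 0,0,1,0; 0,0,0,1] := by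
  rw [hs1d]
  ext i j
  fin_cases i <;> fin_cases j <;>
    simp [sigma1m, Matrix.mul_apply, Fin.sum_univ_four, Matrix.vecHead, Matrix.vecTail]

lemma hpp : pperp = !![(0:ℂ),0,0,0; 0,1,0,0; 0,0,1,0; 0,0,0,1] := by
  ext i j
  fin_cases i <;> fin_cases j <;>
    simp [pperp, Matrix.one_apply, Matrix.single, Matrix.vecHead, Matrix.vecTail]

lemma hLs (ω : ℝ) (ρ : Matrix (Fin 4) (Fin 4) ℂ) :
    Lstar ω ρ = (-Complex.I) • (Ham ω * ρ - ρ * Ham ω)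
      + sigma1m * ρ * !![0,0,0,0; 0,0,0,0; 1,0,0,0; 0,1,0,0]
      - (1 / 2 : ℂ) • (!![(0:ℂ),0,0,0; 0,0,0,0; 0,0,1,0; 0,0,0,1] * ρ
        + ρ * !![(0:ℂ),0,0,0; 0,0,0,0; 0,0,1,0; 0,0,0,1]) := by
  rw [Lstar, hN, hs1d]

set_option maxHeartbeats 2000000 in
open scoped ComplexOrder in
/-- For the two-qubit model with decay on the first site only, no state `ν`
supported in `range p₀^⊥` satisfies `p₀^⊥ L_*(ν) p₀^⊥ = -ν`: `α = 1` is not a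
quasi-stationary decay rate for this model. -/
theorem no_qss_rate_one (ω : ℝ) (hω : ω ≠ 0) :
    ∀ ν : Matrix (Fin 4) (Fin 4) ℂ, ν.PosSemidef → ν.trace = 1 →
      pperp * ν * pperp = ν →
      pperp * Lstar ω ν * pperp ≠ -ν := by
  intro ν hpsd htr hsupp heq
  have hωC : (ω : ℂ) ≠ 0 := by exact_mod_cast hω
  have hIW : Complex.I * ((ω:ℂ)/2) ≠ 0 :=
    mul_ne_zero Complex.I_ne_zero (div_ne_zero hωC two_ne_zero)
  have E : ∀ i j, (pperp * Lstar ω ν * pperp) i j = (-ν) i j := fun i j => by rw [heq]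
  have S : ∀ i j, (pperp * ν * pperp) i j = ν i j := fun i j => by rw [hsupp]
  have h00 := S 0 0
  simp [hpp, Matrix.mul_apply, Fin.sum_univ_four, Matrix.vecHead, Matrix.vecTail] at h00
  -- h00 : 0 = ν 0 0
  have e11 := E 1 1
  have e12 := E 1 2
  have e21 := E 2 1
  have e22 := E 2 2
  simp [hLs, hH, hpp, sigma1m, Matrix.mul_apply, Fin.sum_univ_four, Matrix.vecMul,
    dotProduct, Matrix.vecHead, Matrix.vecTail] at e11 e12 e21 e22
  -- e11 : -(I * (ω/2 * ν 2 1 - ν 1 2 * (ω/2))) + ν 3 3 = -ν 1 1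
  -- e12 : -(I * (ω/2 * ν 2 2 - ν 1 1 * (ω/2))) - 2⁻¹ * ν 1 2 = -ν 1 2
  -- e21 : -(I * (ω/2 * ν 1 1 - ν 2 2 * (ω/2))) - 2⁻¹ * ν 2 1 = -ν 2 1
  -- e22 : -(I * (ω/2 * ν 1 2 - ν 2 1 * (ω/2))) - (2⁻¹ * ν 2 2 + 2⁻¹ * ν 2 2) = -ν 2 2
  simp [Matrix.trace, Matrix.diag, Fin.sum_univ_four] at htr
  have h1 : Complex.I * ((ω:ℂ)/2) * (ν 1 2 - ν 2 1) = 0 := by linear_combination -e22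
  have hbc : ν 1 2 - ν 2 1 = 0 := (mul_eq_zero.mp h1).resolve_left hIW
  have h2 : ν 1 2 + ν 2 1 = 0 := by linear_combination 2*e12 + 2*e21
  have hb : ν 1 2 = 0 := by linear_combination (1/2 : ℂ)*h2 + (1/2 : ℂ)*hbc
  have hc : ν 2 1 = 0 := by linear_combination h2 - hb
  have h3 : Complex.I * ((ω:ℂ)/2) * (ν 2 2 - ν 1 1) = 0 := by
    linear_combination -e12 + (1/2 : ℂ)*hb
  have hda : ν 2 2 - ν 1 1 = 0 := (mul_eq_zero.mp h3).resolve_left hIW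
  have hfa : ν 1 1 + ν 3 3 = 0 := by
    linear_combination e11 + Complex.I*((ω:ℂ)/2)*hc - Complex.I*((ω:ℂ)/2)*hb
  have h33 : ν 3 3 = -1 := by linear_combination -htr - h00 + hda + 2*hfa
  have hpos : (0:ℂ) ≤ ν 3 3 := by
    have := hpsd.dotProduct_mulVec_nonneg (Pi.single 3 1)
    simpa [dotProduct, Matrix.mulVec, Fin.sum_univ_four, Pi.single_apply] using this
  rw [h33] at hpos
  norm_num [Complex.le_def] at hpos

end
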